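/- Let n be a positive integer. Then τ(n+1) ≡ Σ (-1)^{r+s} (mod 23), where the sum runs over all pairs of integers (r, s) ∈ ℤ × ℤ with n = (3r^2 + r)/2 + 23·(3s^2 + s)/2. -/

import Mathlib

open PowerSeries Finset

/-- `1 - X^(m+1)` is a unit in `ℤ⟦X⟧`. -/
lemma isUnit_one_sub_X_pow (m : ℕ) :
    IsUnit ((1 : PowerSeries ℤ) - (PowerSeries.X : PowerSeries ℤ) ^ (m + 1)) := by
  rw [PowerSeries.isUnit_iff_constantCoeff]
  simp

/-- `tau k n` is the coefficient of `q^n` in `q·∏_{m=1}^∞ (1-q^m)^k` (`k : ℤ`).  Since each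
factor `(1-q^m)^(±|k|)` is `1 + (terms of degree ≥ m)`, the coefficient of `q^(n-1)` in the
infinite product agrees with that of the finite product `∏_{m=1}^{n} (1-q^m)^k`, computed in
the unit group of `ℤ⟦X⟧` (so that negative exponents make sense). -/
noncomputable def tau (k : ℤ) (n : ℕ) : ℤ :=
  PowerSeries.coeff (R := ℤ) (n - 1)
    ((↑(∏ m ∈ Finset.range n, (isUnit_one_sub_X_pow m).unit ^ k) : PowerSeries ℤ))


section RamanujanAux

/-- triangular number `1+2+⋯+j`. -/
def tri (j : ℕ) : ℕ := ∑ i ∈ range j, (i + 1)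

lemma tri_succ (j : ℕ) : tri (j + 1) = tri j + (j + 1) := Finset.sum_range_succ _ j

lemma two_tri (j : ℕ) : 2 * tri j = j * (j + 1) := by
  induction j with
  | zero => simp [tri]
  | succ k ih => rw [tri_succ]; ring_nf; ring_nf at ih; omega

/-- `Q j n = ∏_{i=j+1}^{n} (1 - Polynomial.X^i)`. -/
noncomputable def Q (j n : ℕ) : Polynomial ℤ := ∏ i ∈ Icc (j + 1) n, (1 - Polynomial.X ^ i)

/-- Shanks' partial sum. -/
noncomputable def S (n : ℕ) : Polynomial ℤ :=
  ∑ j ∈ range (n + 1), (-1) ^ j * Q j n * Polynomial.X ^ (tri j + j * n)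

/-- truncated pentagonal series. -/
noncomputable def G (n : ℕ) : Polynomial ℤ :=
  1 + ∑ j ∈ range n, (-1) ^ (j + 1) *
    (Polynomial.X ^ (tri (j + 1) + (j + 1) * (j + 1)) + Polynomial.X ^ (tri (j + 1) + (j + 1) * j))

/-- telescoping auxiliary. -/
noncomputable def U (n j : ℕ) : Polynomial ℤ :=
  (-1) ^ j * (∏ i ∈ Icc j n, (1 - Polynomial.X ^ i)) * Polynomial.X ^ (tri j + j * n)

lemma U_zero (n : ℕ) : U n 0 = 0 := by
  have h0 : (0:ℕ) ∈ Icc 0 n := by simp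
  rw [U, Finset.prod_eq_zero h0 (by simp)]
  ring

lemma U_top (n : ℕ) : U n (n + 1) = (-1) ^ (n + 1) * Polynomial.X ^ (tri (n + 1) + (n + 1) * n) := by
  rw [U, Icc_eq_empty (by omega), prod_empty]; ring

lemma Icc_prod_eq (j n : ℕ) (h : j ≤ n) :
    (∏ i ∈ Icc j n, (1 - Polynomial.X ^ i)) = (1 - Polynomial.X ^ j) * Q j n := by
  rw [Q, show Icc j n = insert j (Icc (j+1) n) by rw [Finset.Icc_add_one_left_eq_Ioc, Finset.Ioc_insert_left h],
    prod_insert (by simp)]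

lemma key_step (n j : ℕ) (h : j ≤ n) :
    (-1) ^ j * Q j (n + 1) * Polynomial.X ^ (tri j + j * (n + 1))
      - (-1) ^ j * Q j n * Polynomial.X ^ (tri j + j * n) = U n (j + 1) - U n j := by
  have h1 : Q j (n + 1) = Q j n * (1 - Polynomial.X ^ (n + 1)) := by
    rw [Q, Q, Finset.prod_Icc_succ_top (by omega)]
  have h2 : tri j + j * (n + 1) = (tri j + j * n) + j := by ring
  have h3 : tri (j + 1) + (j + 1) * n = (tri j + j * n) + (j + 1 + n) := by
    rw [tri_succ]; ring
  rw [U, U, h1, h2, h3, Icc_prod_eq j n h,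
    show (∏ i ∈ Icc (j+1) n, ((1:Polynomial ℤ) - Polynomial.X ^ i)) = Q j n from rfl,
    pow_add, pow_add, pow_succ, pow_add]
  ring

theorem shanks (n : ℕ) : S n = G n := by
  induction n with
  | zero => simp [S, G, Q, tri]
  | succ n ih =>
    have hS : S (n + 1) = S n + (U n (n + 1) +
        (-1) ^ (n + 1) * Polynomial.X ^ (tri (n + 1) + (n + 1) * (n + 1))) := by
      have e1 : S (n + 1) - S n =
          (∑ j ∈ range (n + 1),
            ((-1) ^ j * Q j (n + 1) * Polynomial.X ^ (tri j + j * (n + 1))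
              - (-1) ^ j * Q j n * Polynomial.X ^ (tri j + j * n)))
          + (-1) ^ (n + 1) * Q (n + 1) (n + 1) * Polynomial.X ^ (tri (n + 1) + (n + 1) * (n + 1)) := by
        rw [S, S, Finset.sum_range_succ, Finset.sum_sub_distrib]
        ring
      have e2 : ∑ j ∈ range (n + 1),
            ((-1) ^ j * Q j (n + 1) * Polynomial.X ^ (tri j + j * (n + 1))
              - (-1) ^ j * Q j n * Polynomial.X ^ (tri j + j * n)) = U n (n + 1) := by
        rw [Finset.sum_congr rfl (fun j hj => key_step n j (by simp at hj; omega)),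
          Finset.sum_range_sub, U_zero, sub_zero]
      have e3 : Q (n + 1) (n + 1) = 1 := by rw [Q, Icc_eq_empty (by omega), prod_empty]
      rw [e3] at e1
      rw [e2] at e1
      linear_combination e1
    rw [hS, ih, U_top, G, G, Finset.sum_range_succ]
    ring
lemma tri_pos (j : ℕ) : 1 ≤ tri (j + 1) := by rw [tri_succ]; omega


/-- signed pentagonal-number indicator sum. -/
def pc (d M N : ℕ) : ℤ :=
  (if N = 0 then 1 else 0) + ∑ j ∈ range M, (-1) ^ (j + 1) *
    ((if N = d * (tri (j + 1) + (j + 1) * (j + 1)) then 1 else 0)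
      + (if N = d * (tri (j + 1) + (j + 1) * j) then 1 else 0))

noncomputable def phi (d : ℕ) : Polynomial ℤ →ₐ[ℤ] PowerSeries ℤ :=
  Polynomial.aeval (PowerSeries.X ^ d)

lemma phi_X_pow (d k : ℕ) : phi d (Polynomial.X ^ k) = PowerSeries.X ^ (d * k) := by
  simp [phi, ← pow_mul, mul_comm]

lemma phi_one_sub (d i : ℕ) : phi d (1 - Polynomial.X ^ i) = 1 - PowerSeries.X ^ (d * i) := by
  rw [map_sub, map_one, phi_X_pow]

lemma phi_Q0 (d M : ℕ) :
    phi d (Q 0 M) = ∏ m ∈ range M, (1 - PowerSeries.X ^ (d * (m + 1))) := by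
  rw [Q, map_prod, show Icc (0 + 1) M = Ico 1 (M + 1) by rw [Finset.Ico_add_one_right_eq_Icc],
    Finset.prod_Ico_eq_prod_range]
  simp only [add_tsub_cancel_right, phi_one_sub, add_comm]

lemma coeff_prod_pent (d M N : ℕ) (hd : 1 ≤ d) (hNM : N ≤ M) :
    PowerSeries.coeff (R := ℤ) N (∏ m ∈ range M, (1 - PowerSeries.X ^ (d * (m + 1))))
      = pc d M N := by
  have hSG := congrArg (phi d) (shanks M)
  have hS' : phi d (S M) = (∑ j ∈ range M, ((-1) ^ (j + 1) * phi d (Q (j + 1) M))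
          * PowerSeries.X ^ (d * (tri (j + 1) + (j + 1) * M)))
      + (∏ m ∈ range M, (1 - PowerSeries.X ^ (d * (m + 1)))) := by
    rw [S, map_sum, Finset.sum_range_succ']
    congr 1
    · exact Finset.sum_congr rfl fun j _ => by
        rw [map_mul, map_mul, map_pow, map_neg, map_one, phi_X_pow]
    · simp [phi_Q0, tri]
  have hG' : phi d (G M) = 1 + ∑ j ∈ range M, ((-1 : PowerSeries ℤ) ^ (j + 1) *
      (PowerSeries.X ^ (d * (tri (j + 1) + (j + 1) * (j + 1)))
        + PowerSeries.X ^ (d * (tri (j + 1) + (j + 1) * j)))) := by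
    rw [G, map_add, map_one, map_sum]
    congr 1
    exact Finset.sum_congr rfl fun j _ => by
      rw [map_mul, map_add, map_pow, map_neg, map_one, phi_X_pow, phi_X_pow]
  rw [hS', hG'] at hSG
  have hjunk : ∀ j ∈ range M, PowerSeries.coeff (R := ℤ) N
      (((-1) ^ (j + 1) * phi d (Q (j + 1) M))
        * PowerSeries.X ^ (d * (tri (j + 1) + (j + 1) * M))) = 0 := by
    intro j _
    rw [PowerSeries.coeff_mul_X_pow', if_neg]
    intro habs
    have h1 : 1 ≤ tri (j + 1) := tri_pos j
    have : d * (tri (j + 1) + (j + 1) * M) ≥ 1 * (1 + 1 * M) := by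
      apply Nat.mul_le_mul hd
      exact Nat.add_le_add h1 (Nat.mul_le_mul (by omega) le_rfl)
    omega
  have hc := congrArg (PowerSeries.coeff (R := ℤ) N) hSG
  rw [map_add, map_add, map_sum, Finset.sum_eq_zero hjunk, zero_add, map_sum] at hc
  rw [hc, pc, PowerSeries.coeff_one]
  congr 1
  refine Finset.sum_congr rfl fun j _ => ?_
  rw [show ((-1 : PowerSeries ℤ) ^ (j + 1)) = PowerSeries.C (R := ℤ) ((-1) ^ (j + 1)) by
        rw [map_pow, map_neg, map_one],
    PowerSeries.coeff_C_mul, map_add, PowerSeries.coeff_X_pow, PowerSeries.coeff_X_pow]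

lemma two_tri_int (j : ℕ) : 2 * ((tri j : ℤ)) = (j:ℤ) * (j + 1) := by
  exact_mod_cast two_tri j

lemma bridge_plus (d N j : ℕ) :
    (N = d * (tri j + j * j)) ↔ ((2 * N : ℤ) = d * (3 * (j:ℤ) ^ 2 + j)) := by
  have h := two_tri_int j
  constructor
  · intro h'
    have h'' : ((N:ℤ)) = (d:ℤ) * ((tri j : ℤ) + (j:ℤ) * j) := by exact_mod_cast h'
    linear_combination 2 * h'' + (d:ℤ) * h
  · intro h'
    have h2 : (2:ℤ) * N = 2 * ((d:ℤ) * ((tri j : ℤ) + (j:ℤ) * j)) := by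
      linear_combination h' - (d:ℤ) * h
    have h3 : (N:ℤ) = (d:ℤ) * ((tri j : ℤ) + (j:ℤ) * j) := mul_left_cancel₀ two_ne_zero h2
    exact_mod_cast h3

lemma bridge_minus (d N j : ℕ) (hj : 1 ≤ j) :
    (N = d * (tri j + j * (j - 1))) ↔ ((2 * N : ℤ) = d * (3 * (j:ℤ) ^ 2 - j)) := by
  have h := two_tri_int j
  have hc : ((j - 1 : ℕ) : ℤ) = (j:ℤ) - 1 := by
    rw [Nat.cast_sub hj]; norm_num
  constructor
  · intro h'
    have h'' : ((N:ℤ)) = (d:ℤ) * ((tri j : ℤ) + (j:ℤ) * ((j - 1 : ℕ):ℤ)) := by exact_mod_cast h'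
    rw [hc] at h''
    linear_combination 2 * h'' + (d:ℤ) * h
  · intro h'
    have h2 : (2:ℤ) * N = 2 * ((d:ℤ) * ((tri j : ℤ) + (j:ℤ) * ((j:ℤ) - 1))) := by
      linear_combination h' - (d:ℤ) * h
    have h3 : (N:ℤ) = (d:ℤ) * ((tri j : ℤ) + (j:ℤ) * ((j - 1:ℕ):ℤ)) := by
      rw [hc]; exact mul_left_cancel₀ two_ne_zero h2
    exact_mod_cast h3

lemma u_natCast (j : ℕ) : (((-1 : ℤˣ) ^ (j:ℤ) : ℤˣ) : ℤ) = (-1) ^ j := by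
  rw [zpow_natCast]; simp
lemma u_neg_natCast (j : ℕ) : (((-1 : ℤˣ) ^ (-(j:ℤ)) : ℤˣ) : ℤ) = (-1) ^ j := by
  rw [zpow_neg, zpow_natCast]
  have : ((-1 : ℤˣ) ^ j)⁻¹ = (-1) ^ j := by
    rw [← inv_pow]; norm_num
  rw [this]; simp

lemma sum_gplus_stable (d N K : ℕ) (hd : 1 ≤ d) (hK : N ≤ K) :
    ∑ j ∈ range (K + 1), (if (2 * N : ℤ) = d * (3 * (j:ℤ) ^ 2 + j) then (-1:ℤ) ^ j else 0)
      = ∑ j ∈ range (N + 1), (if (2 * N : ℤ) = d * (3 * (j:ℤ) ^ 2 + j) then (-1:ℤ) ^ j else 0) := by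
  refine (Finset.sum_subset (Finset.range_subset_range.mpr (by omega)) ?_).symm
  intro j hj hj'
  simp only [mem_range] at hj hj'
  rw [if_neg]
  intro habs
  have hjN : (N:ℤ) < j := by exact_mod_cast (by omega : N < j)
  have hj1 : (1:ℤ) ≤ j := by exact_mod_cast (by omega : 1 ≤ j)
  have hd' : (1:ℤ) ≤ d := by exact_mod_cast hd
  have k1 : (3 * (j:ℤ) ^ 2 + j) ≥ 2 * j + 2 := by nlinarith
  have k2 : (d:ℤ) * (3 * (j:ℤ) ^ 2 + j) ≥ 1 * (3 * (j:ℤ) ^ 2 + j) :=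
    mul_le_mul_of_nonneg_right hd' (by nlinarith)
  nlinarith

lemma sum_gminus_stable (d N K : ℕ) (hd : 1 ≤ d) (hK : N ≤ K) :
    ∑ j ∈ Icc 1 K, (if (2 * N : ℤ) = d * (3 * (j:ℤ) ^ 2 - j) then (-1:ℤ) ^ j else 0)
      = ∑ j ∈ Icc 1 N, (if (2 * N : ℤ) = d * (3 * (j:ℤ) ^ 2 - j) then (-1:ℤ) ^ j else 0) := by
  refine (Finset.sum_subset (Finset.Icc_subset_Icc_right hK) ?_).symm
  intro j hj hj'
  simp only [mem_Icc] at hj hj'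
  rw [if_neg]
  intro habs
  have hjN : (N:ℤ) < j := by exact_mod_cast (by omega : N < j)
  have hj1 : (1:ℤ) ≤ j := by exact_mod_cast (by omega : 1 ≤ j)
  have hd' : (1:ℤ) ≤ d := by exact_mod_cast hd
  have k1 : (3 * (j:ℤ) ^ 2 - j) ≥ 2 * j - 1 := by nlinarith
  have k2 : (d:ℤ) * (3 * (j:ℤ) ^ 2 - j) ≥ 1 * (3 * (j:ℤ) ^ 2 - j) :=
    mul_le_mul_of_nonneg_right hd' (by nlinarith)
  nlinarith

lemma pc_eq_sum (d M N L : ℕ) (hd : 1 ≤ d) (hNM : N ≤ M) (hNL : N ≤ L) :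
    pc d M N = ∑ r ∈ (Icc (-(L:ℤ)) (L:ℤ)).filter (fun r => (2 * N : ℤ) = d * (3 * r ^ 2 + r)),
      (((-1 : ℤˣ) ^ r : ℤˣ) : ℤ) := by
  have hsplit : (Icc (-(L:ℤ)) (L:ℤ)).filter (fun r => (2 * N : ℤ) = d * (3 * r ^ 2 + r))
      = ((Icc (-(L:ℤ)) (-1:ℤ)).filter (fun r => (2 * N : ℤ) = d * (3 * r ^ 2 + r)))
        ∪ ((Icc (0:ℤ) (L:ℤ)).filter (fun r => (2 * N : ℤ) = d * (3 * r ^ 2 + r))) := by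
    ext r
    simp only [mem_filter, mem_union, mem_Icc]
    omega
  have hdisj : Disjoint
      ((Icc (-(L:ℤ)) (-1:ℤ)).filter (fun r => (2 * N : ℤ) = d * (3 * r ^ 2 + r)))
      ((Icc (0:ℤ) (L:ℤ)).filter (fun r => (2 * N : ℤ) = d * (3 * r ^ 2 + r))) := by
    rw [Finset.disjoint_left]
    intro r h1 h2
    simp only [mem_filter, mem_Icc] at h1 h2
    omega
  rw [hsplit, Finset.sum_union hdisj]
  have hpos : ∑ r ∈ (Icc (0:ℤ) (L:ℤ)).filter (fun r => (2 * N : ℤ) = d * (3 * r ^ 2 + r)),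
      (((-1 : ℤˣ) ^ r : ℤˣ) : ℤ)
      = ∑ j ∈ range (L + 1), (if (2 * N : ℤ) = d * (3 * (j:ℤ) ^ 2 + j) then (-1:ℤ) ^ j else 0) := by
    rw [Finset.sum_filter]
    refine Finset.sum_nbij' (fun r => r.toNat) (fun j => (j : ℤ)) ?_ ?_ ?_ ?_ ?_
    · intro r hr; simp only [mem_Icc] at hr; simp only [mem_range]; omega
    · intro j hj; simp only [mem_range] at hj; simp only [mem_Icc]; omega
    · intro r hr; simp only [mem_Icc] at hr; omega
    · intro j _; simp
    · intro r hr
      simp only [mem_Icc] at hr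
      obtain ⟨j0, rfl⟩ : ∃ j0 : ℕ, r = (j0 : ℤ) := ⟨r.toNat, (Int.toNat_of_nonneg hr.1).symm⟩
      simp only [Int.toNat_natCast, u_natCast]
  have hneg : ∑ r ∈ (Icc (-(L:ℤ)) (-1:ℤ)).filter (fun r => (2 * N : ℤ) = d * (3 * r ^ 2 + r)),
      (((-1 : ℤˣ) ^ r : ℤˣ) : ℤ)
      = ∑ j ∈ Icc 1 L, (if (2 * N : ℤ) = d * (3 * (j:ℤ) ^ 2 - j) then (-1:ℤ) ^ j else 0) := by
    rw [Finset.sum_filter]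
    refine Finset.sum_nbij' (fun r => (-r).toNat) (fun j => -(j : ℤ)) ?_ ?_ ?_ ?_ ?_
    · intro r hr; simp only [mem_Icc] at hr ⊢; omega
    · intro j hj; simp only [mem_Icc] at hj ⊢; omega
    · intro r hr; simp only [mem_Icc] at hr; omega
    · intro j hj; simp only [mem_Icc] at hj; omega
    · intro r hr
      simp only [mem_Icc] at hr
      obtain ⟨j0, rfl⟩ : ∃ j0 : ℕ, r = -(j0 : ℤ) := ⟨(-r).toNat, by omega⟩
      simp only [neg_neg, Int.toNat_natCast, u_neg_natCast]
      rw [show (3 * (-(j0:ℤ)) ^ 2 + (-(j0:ℤ))) = 3 * (j0:ℤ) ^ 2 - j0 by ring]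
  rw [hpos, hneg]
  rw [sum_gplus_stable d N L hd hNL, sum_gminus_stable d N L hd hNL,
    ← sum_gplus_stable d N M hd hNM, ← sum_gminus_stable d N M hd hNM]
  rw [pc]
  have e1 : ∑ j ∈ range (M + 1), (if (2 * N : ℤ) = d * (3 * (j:ℤ) ^ 2 + j) then (-1:ℤ) ^ j else 0)
      = (if N = 0 then 1 else 0)
        + ∑ j ∈ range M, (-1:ℤ) ^ (j + 1)
            * (if N = d * (tri (j + 1) + (j + 1) * (j + 1)) then 1 else 0) := by
    rw [Finset.sum_range_succ']
    rw [add_comm]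
    congr 1
    · have h0 : ((2 * N : ℤ) = d * (3 * ((0:ℕ):ℤ) ^ 2 + ((0:ℕ):ℤ))) ↔ N = 0 := by
        norm_num
      rw [if_congr h0 rfl rfl]
      norm_num
    · refine Finset.sum_congr rfl fun j _ => ?_
      simp only [← bridge_plus d N (j + 1)]
      split_ifs <;> ring
  have e2 : ∑ j ∈ Icc 1 M, (if (2 * N : ℤ) = d * (3 * (j:ℤ) ^ 2 - j) then (-1:ℤ) ^ j else 0)
      = ∑ j ∈ range M, (-1:ℤ) ^ (j + 1)
          * (if N = d * (tri (j + 1) + (j + 1) * j) then 1 else 0) := by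
    rw [show Icc 1 M = Ico 1 (M + 1) by rw [Finset.Ico_add_one_right_eq_Icc], Finset.sum_Ico_eq_sum_range]
    simp only [add_tsub_cancel_right]
    refine Finset.sum_congr rfl fun j _ => ?_
    rw [show 1 + j = j + 1 by ring]
    simp only [← bridge_minus d N (j + 1) (by omega), Nat.add_sub_cancel]
    split_ifs <;> ring
  rw [e1, e2]
  simp only [mul_add]
  rw [Finset.sum_add_distrib]
  ring


instance charP_psZMod : CharP ((ZMod 23)⟦X⟧) 23 := by
  constructor
  intro n
  rw [← map_natCast (C (R := ZMod 23)) n, map_eq_zero_iff _ (PowerSeries.C_injective ..)]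
  exact CharP.cast_eq_zero_iff _ 23 n

lemma factor_mod23 (k : ℕ) :
    ((1 : (ZMod 23)⟦X⟧) - PowerSeries.X ^ k) ^ 24
      = (1 - PowerSeries.X ^ k) * (1 - PowerSeries.X ^ (23 * k)) := by
  haveI : Fact (Nat.Prime 23) := ⟨by norm_num⟩
  have h23 : ((1 : (ZMod 23)⟦X⟧) - PowerSeries.X ^ k) ^ 23 = 1 - PowerSeries.X ^ (23 * k) := by
    rw [sub_pow_char, one_pow, ← pow_mul, mul_comm k 23]
  rw [show (24 : ℕ) = 23 + 1 from rfl, pow_succ, h23]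
  ring

lemma cast_coeff_eq (n : ℕ) :
    ((PowerSeries.coeff (R := ℤ) n (∏ m ∈ range (n + 1), (1 - PowerSeries.X ^ (m + 1)) ^ 24) : ℤ)
        : ZMod 23)
      = ((PowerSeries.coeff (R := ℤ) n
          ((∏ m ∈ range (n + 1), (1 - PowerSeries.X ^ (m + 1)))
            * (∏ m ∈ range (n + 1), (1 - PowerSeries.X ^ (23 * (m + 1))))) : ℤ) : ZMod 23) := by
  have h1 := PowerSeries.coeff_map (Int.castRingHom (ZMod 23)) n
      (∏ m ∈ range (n + 1), (1 - PowerSeries.X ^ (m + 1)) ^ 24)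
  have h2 := PowerSeries.coeff_map (Int.castRingHom (ZMod 23)) n
      ((∏ m ∈ range (n + 1), (1 - PowerSeries.X ^ (m + 1)))
        * (∏ m ∈ range (n + 1), (1 - PowerSeries.X ^ (23 * (m + 1)))))
  rw [show ((Int.castRingHom (ZMod 23)) : ℤ → ZMod 23) = (Int.cast : ℤ → ZMod 23) from rfl] at h1 h2
  rw [← h1, ← h2]
  congr 1
  simp only [map_mul, map_prod, map_pow, map_sub, map_one, PowerSeries.map_X]
  rw [← Finset.prod_mul_distrib]
  exact Finset.prod_congr rfl fun m _ => factor_mod23 (m + 1)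

lemma even_pent (r : ℤ) : ∃ k : ℤ, 3 * r ^ 2 + r = k + k ∧ 0 ≤ k := by
  obtain ⟨k, hk⟩ := Int.even_mul_succ_self r
  refine ⟨r ^ 2 + k, by linear_combination hk, ?_⟩
  nlinarith [sq_nonneg r, sq_nonneg (r + 1)]

lemma u_add (r s : ℤ) : (((-1 : ℤˣ) ^ (r + s) : ℤˣ) : ℤ)
    = (((-1 : ℤˣ) ^ r : ℤˣ) : ℤ) * (((-1 : ℤˣ) ^ s : ℤˣ) : ℤ) := by
  rw [zpow_add, Units.val_mul]

lemma key_sum (n : ℕ) :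
    PowerSeries.coeff (R := ℤ) n ((∏ m ∈ range (n + 1), (1 - PowerSeries.X ^ (m + 1)))
        * (∏ m ∈ range (n + 1), (1 - PowerSeries.X ^ (23 * (m + 1)))))
      = ∑ x ∈ ((Finset.Icc (-(n : ℤ) - 1) ((n : ℤ) + 1)) ×ˢ
              (Finset.Icc (-(n : ℤ) - 1) ((n : ℤ) + 1))).filter
          (fun x => 2 * (n : ℤ) = (3 * x.1 ^ 2 + x.1) + 23 * (3 * x.2 ^ 2 + x.2)),
        (((-1 : ℤˣ) ^ (x.1 + x.2) : ℤˣ) : ℤ) := by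
  have hIcc : Finset.Icc (-(n : ℤ) - 1) ((n : ℤ) + 1)
      = Finset.Icc (-((n + 1 : ℕ) : ℤ)) (((n + 1 : ℕ) : ℤ)) := by
    congr 1 <;> push_cast <;> ring
  set A : Finset ℤ := Finset.Icc (-(n : ℤ) - 1) ((n : ℤ) + 1) with hA
  -- coefficient of the first factor
  have hc1 : ∀ a : ℕ, a ≤ n → PowerSeries.coeff (R := ℤ) a
      (∏ m ∈ range (n + 1), (1 - PowerSeries.X ^ (m + 1)))
      = ∑ r ∈ A.filter (fun r => (2 * a : ℤ) = 3 * r ^ 2 + r), (((-1 : ℤˣ) ^ r : ℤˣ) : ℤ) := by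
    intro a ha
    have h := coeff_prod_pent 1 (n + 1) a le_rfl (by omega)
    simp only [one_mul] at h
    rw [h, pc_eq_sum 1 (n + 1) a (n + 1) le_rfl (by omega) (by omega), ← hIcc]
    apply Finset.sum_congr
    · apply Finset.filter_congr
      intro r _
      simp only [Nat.cast_one, one_mul]
    · intros; rfl
  have hc2 : ∀ b : ℕ, b ≤ n → PowerSeries.coeff (R := ℤ) b
      (∏ m ∈ range (n + 1), (1 - PowerSeries.X ^ (23 * (m + 1))))
      = ∑ s ∈ A.filter (fun s => (2 * b : ℤ) = 23 * (3 * s ^ 2 + s)),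
          (((-1 : ℤˣ) ^ s : ℤˣ) : ℤ) := by
    intro b hb
    rw [coeff_prod_pent 23 (n + 1) b (by norm_num) (by omega),
      pc_eq_sum 23 (n + 1) b (n + 1) (by norm_num) (by omega) (by omega), ← hIcc]
    apply Finset.sum_congr
    · apply Finset.filter_congr
      intro r _
      norm_num
    · intros; rfl
  rw [PowerSeries.coeff_mul]
  have step1 : ∀ p : ℕ × ℕ, p ∈ antidiagonal n →
      PowerSeries.coeff (R := ℤ) p.1 (∏ m ∈ range (n + 1), (1 - PowerSeries.X ^ (m + 1)))
        * PowerSeries.coeff (R := ℤ) p.2 (∏ m ∈ range (n + 1), (1 - PowerSeries.X ^ (23 * (m + 1))))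
      = ∑ x ∈ (A ×ˢ A).filter (fun x : ℤ × ℤ => (2 * p.1 : ℤ) = 3 * x.1 ^ 2 + x.1
            ∧ (2 * p.2 : ℤ) = 23 * (3 * x.2 ^ 2 + x.2)),
          (((-1 : ℤˣ) ^ (x.1 + x.2) : ℤˣ) : ℤ) := by
    intro p hp
    rw [Finset.HasAntidiagonal.mem_antidiagonal] at hp
    rw [hc1 p.1 (by omega), hc2 p.2 (by omega), Finset.sum_mul_sum,
      Finset.filter_product (fun r : ℤ => (2 * p.1 : ℤ) = 3 * r ^ 2 + r)
        (fun s : ℤ => (2 * p.2 : ℤ) = 23 * (3 * s ^ 2 + s)), Finset.sum_product]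
    exact Finset.sum_congr rfl fun r _ => Finset.sum_congr rfl fun s _ => (u_add r s).symm
  rw [Finset.sum_congr rfl step1]
  -- now collapse the double sum via fiberwise summation
  set T := ((A ×ˢ A)).filter
      (fun x : ℤ × ℤ => 2 * (n : ℤ) = (3 * x.1 ^ 2 + x.1) + 23 * (3 * x.2 ^ 2 + x.2)) with hT
  have hmaps : ∀ x ∈ T, (((3 * x.1 ^ 2 + x.1).toNat / 2),
      n - (3 * x.1 ^ 2 + x.1).toNat / 2) ∈ antidiagonal n := by
    intro x hx
    rw [hT, Finset.mem_filter] at hx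
    obtain ⟨k, hk, hk0⟩ := even_pent x.1
    obtain ⟨l, hl, hl0⟩ := even_pent x.2
    rw [Finset.HasAntidiagonal.mem_antidiagonal]
    have h := hx.2
    rw [hk, hl] at h
    rw [hk]
    dsimp only
    omega
  rw [← Finset.sum_fiberwise_of_maps_to hmaps (fun x => (((-1 : ℤˣ) ^ (x.1 + x.2) : ℤˣ) : ℤ))]
  apply Finset.sum_congr rfl
  intro p hp
  rw [Finset.HasAntidiagonal.mem_antidiagonal] at hp
  apply Finset.sum_congr _ (fun _ _ => rfl)
  ext x
  simp only [hT, Finset.mem_filter, Prod.ext_iff]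
  obtain ⟨k, hk, hk0⟩ := even_pent x.1
  obtain ⟨l, hl, hl0⟩ := even_pent x.2
  rw [hk, hl]
  constructor
  · rintro ⟨hxA, h1, h2⟩
    exact ⟨⟨hxA, by omega⟩, by omega, by omega⟩
  · rintro ⟨⟨hxA, hcond⟩, hg1, hg2⟩
    exact ⟨hxA, by omega, by omega⟩

lemma tau_eq_coeff (n : ℕ) : tau 24 (n + 1) =
    PowerSeries.coeff (R := ℤ) n (∏ m ∈ range (n + 1), (1 - PowerSeries.X ^ (m + 1)) ^ 24) := by
  have hser : ((↑(∏ m ∈ Finset.range (n + 1), (isUnit_one_sub_X_pow m).unit ^ (24:ℤ)) :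
      PowerSeries ℤ)) = ∏ m ∈ range (n + 1), (1 - PowerSeries.X ^ (m + 1)) ^ 24 := by
    rw [Units.coe_prod]
    refine Finset.prod_congr rfl fun m _ => ?_
    rw [show (24:ℤ) = ((24:ℕ):ℤ) from rfl, zpow_natCast, Units.val_pow_eq_pow_val,
      IsUnit.unit_spec]
  rw [tau, Nat.add_sub_cancel, hser]

end RamanujanAux

/-- `τ(n+1) ≡ Σ (-1)^(r+s) (mod 23)`, the sum over all pairs of integers `(r, s)` with
`n = (3r²+r)/2 + 23·(3s²+s)/2`.  (Any such pair satisfies `|r|, |s| ≤ n+1`, so the sum may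
be taken over `Icc (-(n+1)) (n+1) × Icc (-(n+1)) (n+1)`.) -/
theorem ramanujanTau_modEq_23 (n : ℕ) (hn : 0 < n) :
    tau 24 (n + 1) ≡
      (∑ x ∈ ((Finset.Icc (-(n : ℤ) - 1) ((n : ℤ) + 1)) ×ˢ
              (Finset.Icc (-(n : ℤ) - 1) ((n : ℤ) + 1))).filter
          (fun x => 2 * (n : ℤ) = (3 * x.1 ^ 2 + x.1) + 23 * (3 * x.2 ^ 2 + x.2)),
        (((-1 : ℤˣ) ^ (x.1 + x.2) : ℤˣ) : ℤ)) [ZMOD 23] := by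
  have htau := tau_eq_coeff n
  apply (ZMod.intCast_eq_intCast_iff _ _ _).mp
  rw [htau, cast_coeff_eq n, key_sum n]
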